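/- arXiv:1710.02670 — 4 statements merged into one kernel-verified Lean document; each statement's English description precedes it below -/
import Mathlib

section
/- Let R̂(s) be the twisted transfer operator R̂(s)v = R(e^{-sφ}v) for a Gibbs-Markov map F with strictly positive integrable roof function φ, acting on the space F_θ(Y) of d_θ-Lipschitz functions. If Re s > 0, then R̂(s) has no eigenvalue λ with |λ| = 1 on F_θ(Y). Consequently, if additionally the essential spectral radius of R̂(s) on F_θ(Y) is strictly less than 1, then the spectral radius of R̂(s) is strictly less than 1. -/
open MeasureTheory

theorem stmt_11 {Y : Type*} [MeasurableSpace Y] (μ : Measure Y) [IsProbabilityMeasure μ]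
    (φ : Y → ℝ) (hφpos : ∀ y, 0 < φ y) (hφint : Integrable φ μ)
    (R : (Y → ℂ) → (Y → ℂ))
    (hRL1 : ∀ g : Y → ℂ, Integrable g μ → ∫ y, ‖R g y‖ ∂μ ≤ ∫ y, ‖g y‖ ∂μ)
    (s : ℂ) (hs : 0 < s.re)
    {X : Type*} [NormedAddCommGroup X] [NormedSpace ℂ X] [CompleteSpace X]
    (T : X →L[ℂ] X) (J : X →ₗ[ℂ] (Y → ℂ))
    (hJ_int : ∀ x : X, Integrable (J x) μ)
    (hJ_inj : ∀ x : X, J x =ᵐ[μ] 0 → x = 0)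
    (hJT : ∀ x : X, J (T x) = R fun y => Complex.exp (-s * (φ y : ℂ)) * J x y) :
    (∀ lam : ℂ, ‖lam‖ = 1 → ∀ x : X, T x = lam • x → x = 0) ∧
    ((∃ r : ℝ, r < 1 ∧ ∀ lam ∈ spectrum ℂ T, r < ‖lam‖ → ∃ x : X, x ≠ 0 ∧ T x = lam • x) →
      spectralRadius ℂ T < 1) := by
  -- Key claim: no eigenvalue of modulus ≥ 1.
  have key : ∀ lam : ℂ, 1 ≤ ‖lam‖ → ∀ x : X, T x = lam • x → x = 0 := by
    intro lam hlam x hx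
    apply hJ_inj
    set f : Y → ℝ := fun y => ‖J x y‖ with hf
    set g : Y → ℝ := fun y => Real.exp (-s.re * φ y) * ‖J x y‖ with hg
    have hfint : Integrable f μ := (hJ_int x).norm
    have hgle : ∀ y, g y ≤ f y := by
      intro y
      have h1 : Real.exp (-s.re * φ y) ≤ 1 := by
        apply Real.exp_le_one_iff.mpr
        nlinarith [hφpos y]
      calc g y ≤ 1 * ‖J x y‖ := by
            apply mul_le_mul_of_nonneg_right h1 (norm_nonneg _)
        _ = f y := one_mul _
    have hgnonneg : ∀ y, 0 ≤ g y := fun y =>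
      mul_nonneg (Real.exp_pos _).le (norm_nonneg _)
    -- the twisted function
    set h : Y → ℂ := fun y => Complex.exp (-s * (φ y : ℂ)) * J x y with hh
    have hnorm : ∀ y, ‖h y‖ = g y := by
      intro y
      simp only [hh, hg, norm_mul, Complex.norm_exp]
      congr 2
      simp [Complex.mul_re]
    have hmeas_exp : AEStronglyMeasurable (fun y => Complex.exp (-s * (φ y : ℂ))) μ := by
      have : Continuous fun t : ℝ => Complex.exp (-s * (t : ℂ)) := by continuity
      exact this.comp_aestronglyMeasurable hφint.1
    have hhint : Integrable h μ := by
      apply Integrable.mono' hfint (hmeas_exp.mul (hJ_int x).1)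
      filter_upwards with y
      simp only [Pi.mul_apply]
      rw [hnorm y]; exact hgle y
    have hgint : Integrable g μ := by
      have := hhint.norm
      simpa only [hnorm] using this
    -- R h = lam • J x
    have hRh : R h = fun y => lam * J x y := by
      have := hJT x
      rw [hx] at this
      rw [← this]
      simp [LinearMap.map_smul]
      rfl
    have hint1 : ∫ y, ‖R h y‖ ∂μ = ‖lam‖ * ∫ y, f y ∂μ := by
      rw [← integral_const_mul]
      congr 1
      ext y
      rw [hRh]
      simp [hf, norm_mul]
    have hchain : ‖lam‖ * ∫ y, f y ∂μ ≤ ∫ y, g y ∂μ := by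
      rw [← hint1]
      have := hRL1 h hhint
      calc ∫ y, ‖R h y‖ ∂μ ≤ ∫ y, ‖h y‖ ∂μ := this
        _ = ∫ y, g y ∂μ := by congr 1; ext y; exact hnorm y
    have hfI_nonneg : 0 ≤ ∫ y, f y ∂μ := integral_nonneg fun y => norm_nonneg _
    have hgI_le : ∫ y, g y ∂μ ≤ ∫ y, f y ∂μ :=
      integral_mono hgint hfint hgle
    have hfI_le : ∫ y, f y ∂μ ≤ ‖lam‖ * ∫ y, f y ∂μ := by
      nlinarith
    have heq : ∫ y, f y ∂μ = ∫ y, g y ∂μ := le_antisymm (hfI_le.trans hchain) hgI_le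
    -- so f = g a.e.
    have hsub : ∫ y, (f y - g y) ∂μ = 0 := by
      rw [integral_sub hfint hgint, heq, sub_self]
    have hae : (fun y => f y - g y) =ᵐ[μ] 0 := by
      have hnn : 0 ≤ᵐ[μ] fun y => f y - g y := by
        filter_upwards with y
        simp [sub_nonneg, hgle y]
      exact (integral_eq_zero_iff_of_nonneg_ae hnn (hfint.sub hgint)).mp hsub
    filter_upwards [hae] with y hy
    simp only [Pi.zero_apply] at hy ⊢
    have hexp : Real.exp (-s.re * φ y) < 1 := by
      apply Real.exp_lt_one_iff.mpr
      nlinarith [hφpos y]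
    by_contra hne
    have hpos : 0 < ‖J x y‖ := norm_pos_iff.mpr hne
    have : f y - g y > 0 := by
      simp only [hf, hg]
      nlinarith
    linarith [this, hy.ge, hy.le]
  constructor
  · intro lam hlam x hx
    exact key lam hlam.ge x hx
  · rintro ⟨r, hr, hev⟩
    by_contra hcon
    push_neg at hcon
    rcases Set.eq_empty_or_nonempty (spectrum ℂ T) with hemp | hne
    · have : spectralRadius ℂ T = 0 := by
        simp [spectralRadius, hemp]
      rw [this] at hcon
      exact absurd hcon (by simp)
    · obtain ⟨lam, hlammem, hlameq⟩ :=
        spectrum.exists_nnnorm_eq_spectralRadius_of_nonempty hne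
      have h1le : (1 : ENNReal) ≤ (‖lam‖₊ : ENNReal) := hlameq ▸ hcon
      have hlam1 : 1 ≤ ‖lam‖ := by
        have := (ENNReal.one_le_coe_iff).mp h1le
        exact_mod_cast this
      have hrlam : r < ‖lam‖ := lt_of_lt_of_le hr hlam1
      obtain ⟨x, hxne, hxev⟩ := hev lam hlammem hrlam
      exact hxne (key lam hlam1 x hxev)
end

section
/- Suppose L₁, L₂, L₃ are positive reals such that ρ = (L₁−L₃)/(L₂−L₃) is Diophantine of exponent α' > 2, i.e. there is c > 0 with |ρ − m₁/m₂| ≥ c|m₂|^{-α'} for all but finitely many integer pairs (m₁,m₂) with m₂ ≠ 0. Fix α > α'. Then there do not exist sequences b_k ∈ ℝ with |b_k| → ∞, n_k ∈ ℕ with n_k = O(log|b_k|), ψ_k ∈ ℝ, and a constant C > 0 such that dist(b_k n_k L_i − ψ_k, 2πℤ) ≤ C|b_k|^{-α} for i = 1, 2, 3 and all k. -/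
open Filter Real

set_option maxHeartbeats 2000000 in
theorem stmt_14 (L₁ L₂ L₃ : ℝ) (h₁ : 0 < L₁) (h₂ : 0 < L₂) (h₃ : 0 < L₃)
    (hne : L₂ ≠ L₃) (α' : ℝ) (hα' : 2 < α') (c : ℝ) (hc : 0 < c)
    (hDio : Set.Finite {p : ℤ × ℤ | p.2 ≠ 0 ∧
      |(L₁ - L₃) / (L₂ - L₃) - (p.1 : ℝ) / (p.2 : ℝ)| < c * |(p.2 : ℝ)| ^ (-α')})
    (α : ℝ) (hα : α' < α) :
    ¬ ∃ (b : ℕ → ℝ) (n : ℕ → ℕ) (ψ : ℕ → ℝ) (C C' : ℝ),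
      0 < C ∧ 0 < C' ∧
      Tendsto (fun k => |b k|) atTop atTop ∧
      (∀ k, 1 ≤ n k) ∧
      (∀ k, (n k : ℝ) ≤ C' * (Real.log |b k| + 1)) ∧
      (∀ k, ∃ m : ℤ, |b k * n k * L₁ - ψ k - 2 * π * m| ≤ C * |b k| ^ (-α)) ∧
      (∀ k, ∃ m : ℤ, |b k * n k * L₂ - ψ k - 2 * π * m| ≤ C * |b k| ^ (-α)) ∧
      (∀ k, ∃ m : ℤ, |b k * n k * L₃ - ψ k - 2 * π * m| ≤ C * |b k| ^ (-α)) := by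
  rintro ⟨b, n, ψ, C, C', hC, hC', hb, hn1, hnlog, h1, h2, h3⟩
  have hπ := Real.pi_pos
  have hπ3 := Real.pi_gt_three
  have hD0 : L₂ - L₃ ≠ 0 := sub_ne_zero.2 hne
  have hDpos : 0 < |L₂ - L₃| := abs_pos.2 hD0
  set ρ : ℝ := (L₁ - L₃) / (L₂ - L₃) with hρdef
  choose m₁ hm₁ using h1
  choose m₂ hm₂ using h2
  choose m₃ hm₃ using h3
  have key : ∀ (L : ℝ) (m : ℕ → ℤ),
      (∀ k, |b k * n k * L - ψ k - 2*π*(m k)| ≤ C * |b k|^(-α)) →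
      ∀ k, |b k * n k * (L - L₃) - 2*π*(((m k - m₃ k : ℤ) : ℝ))| ≤ 2*C*|b k|^(-α) := by
    intro L m hm k
    have e : b k * n k * (L - L₃) - 2*π*(((m k - m₃ k : ℤ) : ℝ))
        = (b k * n k * L - ψ k - 2*π*(m k)) - (b k * n k * L₃ - ψ k - 2*π*(m₃ k)) := by
      push_cast; ring
    rw [e]
    refine (abs_sub _ _).trans ?_
    have := add_le_add (hm k) (hm₃ k)
    linarith
  have key1 := key L₁ m₁ hm₁
  have key2 := key L₂ m₂ hm₂
  set B : ℕ → ℝ := fun k => |b k| with hBdef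
  have hBnn : ∀ k, 0 ≤ B k := fun k => abs_nonneg _
  -- lower bound on |q|
  have hqlow : ∀ᶠ k in atTop, (B k * |L₂ - L₃| - 2*C)/(2*π) ≤ |((m₂ k - m₃ k : ℤ) : ℝ)| := by
    filter_upwards [hb.eventually_ge_atTop 1] with k hk1
    have hBpos : (0:ℝ) < B k := lt_of_lt_of_le one_pos hk1
    have hε1 : B k ^ (-α) ≤ 1 :=
      Real.rpow_le_one_of_one_le_of_nonpos hk1 (by linarith)
    have h2 := key2 k
    have habs : |b k * n k * (L₂ - L₃)| = B k * n k * |L₂ - L₃| := by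
      rw [abs_mul, abs_mul, Nat.abs_cast]
    have hn' : (1:ℝ) ≤ n k := by exact_mod_cast hn1 k
    have hlow : B k * |L₂ - L₃| ≤ |b k * n k * (L₂ - L₃)| := by
      rw [habs]
      nlinarith [hBnn k, le_mul_of_one_le_right (mul_nonneg (hBnn k) (abs_nonneg (L₂-L₃))) hn']
    have htri : |b k * n k * (L₂ - L₃)| - |2*π*((m₂ k - m₃ k : ℤ) : ℝ)| ≤ 2*C*B k^(-α) := by
      have := abs_sub_abs_le_abs_sub (b k * n k * (L₂ - L₃)) (2*π*((m₂ k - m₃ k : ℤ) : ℝ))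
      have h2' := key2 k
      linarith
    have h2pi : |2*π*((m₂ k - m₃ k : ℤ) : ℝ)| = 2*π*|((m₂ k - m₃ k : ℤ) : ℝ)| := by
      rw [abs_mul, abs_of_pos (by linarith : (0:ℝ) < 2*π)]
    rw [div_le_iff₀ (by linarith : (0:ℝ) < 2*π)]
    have : 2*C*B k^(-α) ≤ 2*C := by nlinarith
    nlinarith [h2pi ▸ htri]
  have hQtop : Tendsto (fun k => |((m₂ k - m₃ k : ℤ) : ℝ)|) atTop atTop := by
    refine tendsto_atTop_mono' atTop hqlow ?_
    exact (((hb.atTop_mul_const hDpos).atTop_add tendsto_const_nhds).atTop_div_const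
      (by linarith : (0:ℝ) < 2*π))
  set δ : ℝ := (α - α')/(α'-1) with hδdef
  have hδpos : 0 < δ := div_pos (by linarith) (by linarith)
  have hC₂pos : 0 < C' * (1/δ + 1) := by positivity
  set C₂ : ℝ := C' * (1/δ + 1) with hC₂def
  have hC₄pos : 0 < |L₂ - L₃| * C₂ + 2*C := by positivity
  set C₄ : ℝ := |L₂ - L₃| * C₂ + 2*C with hC₄def
  have hρnn : (0:ℝ) ≤ |ρ| + 1 := by positivity
  have hKpos : 0 < (|ρ| + 1) * (2*C) * C₄ ^ (α'-1) := by positivity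
  set K : ℝ := (|ρ| + 1) * (2*C) * C₄ ^ (α'-1) with hKdef
  have hρD : ρ * (L₂ - L₃) = L₁ - L₃ := div_mul_cancel₀ _ hD0
  have hmem : ∀ᶠ k in atTop, (m₂ k - m₃ k) ≠ 0 ∧
      |ρ - ((m₁ k - m₃ k : ℤ) : ℝ)/((m₂ k - m₃ k : ℤ) : ℝ)|
        < c * |((m₂ k - m₃ k : ℤ) : ℝ)|^(-α') := by
    filter_upwards [hb.eventually_ge_atTop 1, hQtop.eventually_ge_atTop 1,
      hb.eventually_ge_atTop (K/(2*π*c) + 1)] with k hk1 hQ1 hkK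
    have hBpos : (0:ℝ) < B k := lt_of_lt_of_le one_pos hk1
    have hQpos : (0:ℝ) < |((m₂ k - m₃ k : ℤ) : ℝ)| := lt_of_lt_of_le one_pos hQ1
    have hqne : (m₂ k - m₃ k) ≠ 0 := by
      intro h
      rw [h] at hQ1
      norm_num at hQ1
    have hQne : ((m₂ k - m₃ k : ℤ) : ℝ) ≠ 0 := by exact_mod_cast hqne
    have hε1 : B k ^ (-α) ≤ 1 :=
      Real.rpow_le_one_of_one_le_of_nonpos hk1 (by linarith)
    have hεnn : (0:ℝ) ≤ B k ^ (-α) := Real.rpow_nonneg (hBnn k) _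
    have hn' : (1:ℝ) ≤ n k := by exact_mod_cast hn1 k
    -- bound on n
    have hlog : Real.log (B k) ≤ B k ^ δ / δ := Real.log_le_rpow_div (hBnn k) hδpos
    have hone : (1:ℝ) ≤ B k ^ δ := by
      simpa using Real.rpow_le_rpow_of_exponent_le hk1 hδpos.le
    have hnB : (n k : ℝ) ≤ C₂ * B k ^ δ := by
      have hlog1 : Real.log (B k) + 1 ≤ (1/δ + 1) * B k ^ δ := by
        have e : B k ^ δ / δ = (1/δ) * B k ^ δ := by ring
        rw [e] at hlog
        linarith
      calc (n k : ℝ) ≤ C' * (Real.log (B k) + 1) := hnlog k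
        _ ≤ C' * ((1/δ+1) * B k ^ δ) := by
            have hlognn : 0 ≤ Real.log (B k) + 1 := by
              have := Real.log_nonneg hk1
              linarith
            exact mul_le_mul_of_nonneg_left hlog1 hC'.le
        _ = C₂ * B k ^ δ := by rw [hC₂def]; ring
    -- upper bound on |q|
    have hB1δ : B k ^ ((1:ℝ)+δ) = B k * B k ^ δ := by
      rw [Real.rpow_add hBpos, Real.rpow_one]
    have hone' : (1:ℝ) ≤ B k ^ ((1:ℝ)+δ) := by rw [hB1δ]; nlinarith
    have htri : 2*π*|((m₂ k - m₃ k : ℤ) : ℝ)| ≤ B k * n k * |L₂-L₃| + 2*C := by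
      have h2 := key2 k
      have htr := abs_sub_abs_le_abs_sub (2*π*((m₂ k - m₃ k : ℤ) : ℝ))
        (b k * n k * (L₂ - L₃))
      rw [abs_sub_comm] at htr
      have habs : |b k * (n k : ℝ) * (L₂ - L₃)| = B k * n k * |L₂ - L₃| := by
        rw [abs_mul, abs_mul, Nat.abs_cast]
      have h2pi : |2*π*((m₂ k - m₃ k : ℤ) : ℝ)| = 2*π*|((m₂ k - m₃ k : ℤ) : ℝ)| := by
        rw [abs_mul, abs_of_pos (by linarith : (0:ℝ) < 2*π)]
      have hCB : 2*C*B k^(-α) ≤ 2*C := by nlinarith [hε1, hC.le]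
      linarith [htr, h2, habs, h2pi, hCB]
    have hQup : |((m₂ k - m₃ k : ℤ) : ℝ)| ≤ C₄ * B k ^ ((1:ℝ)+δ) := by
      have hbn : B k * n k * |L₂-L₃| ≤ |L₂-L₃| * C₂ * B k ^ ((1:ℝ)+δ) := by
        rw [hB1δ]
        have := mul_le_mul_of_nonneg_left hnB hBpos.le
        nlinarith [abs_nonneg (L₂-L₃)]
      have h2c : 2*C ≤ 2*C*B k ^ ((1:ℝ)+δ) := by nlinarith
      have hQle : |((m₂ k - m₃ k : ℤ) : ℝ)| ≤ 2*π*|((m₂ k - m₃ k : ℤ) : ℝ)| := by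
        nlinarith [hQpos.le]
      rw [hC₄def]
      nlinarith
    -- numerator bound
    have hAbound : |2*π*ρ*((m₂ k - m₃ k : ℤ) : ℝ) - 2*π*((m₁ k - m₃ k : ℤ) : ℝ)|
        ≤ (|ρ|+1) * (2*C*B k^(-α)) := by
      have e : 2*π*ρ*((m₂ k - m₃ k : ℤ) : ℝ) - 2*π*((m₁ k - m₃ k : ℤ) : ℝ)
          = (-ρ) * (b k * n k * (L₂-L₃) - 2*π*((m₂ k - m₃ k : ℤ) : ℝ))
            + (b k * n k * (L₁-L₃) - 2*π*((m₁ k - m₃ k : ℤ) : ℝ)) := by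
        push_cast
        linear_combination (b k * (n k : ℝ)) * hρD
      rw [e]
      refine (abs_add_le _ _).trans ?_
      rw [abs_mul, abs_neg]
      have h1 := mul_le_mul_of_nonneg_left (key2 k) (abs_nonneg ρ)
      have h2 := key1 k
      nlinarith
    -- the W bound
    have hQrnn : (0:ℝ) ≤ |((m₂ k - m₃ k : ℤ) : ℝ)|^(α'-1) :=
      Real.rpow_nonneg (abs_nonneg _) _
    have hexp : (C₄ * B k ^((1:ℝ)+δ))^(α'-1) = C₄^(α'-1) * B k ^(((1:ℝ)+δ)*(α'-1)) := by
      rw [Real.mul_rpow hC₄pos.le (Real.rpow_nonneg (hBnn k) _), ← Real.rpow_mul (hBnn k)]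
    have hQrp : |((m₂ k - m₃ k : ℤ) : ℝ)|^(α'-1) ≤ C₄^(α'-1) * B k ^(((1:ℝ)+δ)*(α'-1)) := by
      rw [← hexp]
      exact Real.rpow_le_rpow (abs_nonneg _) hQup (by linarith)
    have hBprod : B k^(-α) * B k^(((1:ℝ)+δ)*(α'-1)) = B k ^ (-1 : ℝ) := by
      rw [← Real.rpow_add hBpos]
      congr 1
      have hd : δ * (α'-1) = α - α' := div_mul_cancel₀ _ (by linarith : α' - 1 ≠ 0)
      linear_combination hd
    have hW : (|ρ|+1) * (2*C*B k^(-α)) * |((m₂ k - m₃ k : ℤ) : ℝ)|^(α'-1) < 2*π*c := by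
      have hmono : (|ρ|+1) * (2*C*B k^(-α)) * |((m₂ k - m₃ k : ℤ) : ℝ)|^(α'-1)
          ≤ K * B k ^ (-1:ℝ) := by
        calc (|ρ|+1) * (2*C*B k^(-α)) * |((m₂ k - m₃ k : ℤ) : ℝ)|^(α'-1)
            ≤ (|ρ|+1) * (2*C*B k^(-α)) * (C₄^(α'-1) * B k^(((1:ℝ)+δ)*(α'-1))) := by
              refine mul_le_mul_of_nonneg_left hQrp ?_
              positivity
          _ = K * (B k^(-α) * B k^(((1:ℝ)+δ)*(α'-1))) := by rw [hKdef]; ring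
          _ = K * B k ^ (-1:ℝ) := by rw [hBprod]
      have h2πc : (0:ℝ) < 2*π*c := by positivity
      have hKB : K < (2*π*c) * B k := by
        have h' := mul_le_mul_of_nonneg_left hkK h2πc.le
        rw [mul_add, mul_div_cancel₀ _ (ne_of_gt h2πc)] at h'
        linarith
      have hfin : K * B k ^ (-1:ℝ) < 2*π*c := by
        rw [Real.rpow_neg_one]
        rw [show K * (B k)⁻¹ = K / B k by ring]
        rw [div_lt_iff₀ hBpos]
        linarith
      linarith
    refine ⟨hqne, ?_⟩
    -- put things together
    have h2πQ : (0:ℝ) < 2*π*|((m₂ k - m₃ k : ℤ) : ℝ)| := by positivity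
    have hdiv : |ρ - ((m₁ k - m₃ k : ℤ) : ℝ)/((m₂ k - m₃ k : ℤ) : ℝ)|
        = |2*π*ρ*((m₂ k - m₃ k : ℤ) : ℝ) - 2*π*((m₁ k - m₃ k : ℤ) : ℝ)|
          / (2*π*|((m₂ k - m₃ k : ℤ) : ℝ)|) := by
      have e : ρ - ((m₁ k - m₃ k : ℤ) : ℝ)/((m₂ k - m₃ k : ℤ) : ℝ)
          = (2*π*ρ*((m₂ k - m₃ k : ℤ) : ℝ) - 2*π*((m₁ k - m₃ k : ℤ) : ℝ))
            / (2*π*((m₂ k - m₃ k : ℤ) : ℝ)) := by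
        rw [show 2*π*ρ*((m₂ k - m₃ k : ℤ) : ℝ) - 2*π*((m₁ k - m₃ k : ℤ) : ℝ)
              = (2*π)*(ρ*((m₂ k - m₃ k : ℤ) : ℝ) - ((m₁ k - m₃ k : ℤ) : ℝ)) by ring,
            show 2*π*((m₂ k - m₃ k : ℤ) : ℝ) = (2*π)*((m₂ k - m₃ k : ℤ) : ℝ) by ring,
            mul_div_mul_left _ _ (by positivity : (2:ℝ)*π ≠ 0), sub_div,
            mul_div_cancel_right₀ _ hQne]
      rw [e, abs_div, abs_mul, abs_of_pos (by linarith : (0:ℝ) < 2*π)]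
    have hQα : (0:ℝ) < |((m₂ k - m₃ k : ℤ) : ℝ)|^(-α') := Real.rpow_pos_of_pos hQpos _
    have heq : |((m₂ k - m₃ k : ℤ) : ℝ)|^(α'-1) * |((m₂ k - m₃ k : ℤ) : ℝ)|^(-α')
        = (|((m₂ k - m₃ k : ℤ) : ℝ)|)⁻¹ := by
      rw [← Real.rpow_add hQpos, show α'-1 + -α' = (-1:ℝ) by ring, Real.rpow_neg_one]
    have step2 : ((|ρ|+1)*(2*C*B k^(-α)) * |((m₂ k - m₃ k : ℤ) : ℝ)|^(α'-1)/(2*π))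
          * |((m₂ k - m₃ k : ℤ) : ℝ)|^(-α')
        = ((|ρ|+1)*(2*C*B k^(-α))) / (2*π*|((m₂ k - m₃ k : ℤ) : ℝ)|) := by
      rw [div_mul_eq_mul_div, mul_assoc, heq]
      field_simp
    have step3 : ((|ρ|+1)*(2*C*B k^(-α)) * |((m₂ k - m₃ k : ℤ) : ℝ)|^(α'-1)/(2*π))
          * |((m₂ k - m₃ k : ℤ) : ℝ)|^(-α')
        < c * |((m₂ k - m₃ k : ℤ) : ℝ)|^(-α') := by
      refine mul_lt_mul_of_pos_right ?_ hQα
      rw [div_lt_iff₀ (by linarith : (0:ℝ) < 2*π)]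
      linarith
    calc |ρ - ((m₁ k - m₃ k : ℤ) : ℝ)/((m₂ k - m₃ k : ℤ) : ℝ)|
        = |2*π*ρ*((m₂ k - m₃ k : ℤ) : ℝ) - 2*π*((m₁ k - m₃ k : ℤ) : ℝ)|
          / (2*π*|((m₂ k - m₃ k : ℤ) : ℝ)|) := hdiv
      _ ≤ ((|ρ|+1)*(2*C*B k^(-α))) / (2*π*|((m₂ k - m₃ k : ℤ) : ℝ)|) := by
          exact div_le_div_of_nonneg_right hAbound h2πQ.le
      _ = ((|ρ|+1)*(2*C*B k^(-α)) * |((m₂ k - m₃ k : ℤ) : ℝ)|^(α'-1)/(2*π))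
          * |((m₂ k - m₃ k : ℤ) : ℝ)|^(-α') := step2.symm
      _ < c * |((m₂ k - m₃ k : ℤ) : ℝ)|^(-α') := step3
  -- final contradiction
  obtain ⟨M, hM⟩ : ∃ M : ℝ, ∀ s ∈ {s : ℤ × ℤ | s.2 ≠ 0 ∧
      |ρ - (s.1 : ℝ) / (s.2 : ℝ)| < c * |(s.2 : ℝ)| ^ (-α')}, |((s.2 : ℤ) : ℝ)| ≤ M := by
    obtain ⟨M, hM⟩ := (hDio.image (fun s => |((s.2 : ℤ) : ℝ)|)).bddAbove
    exact ⟨M, fun s hs => hM (Set.mem_image_of_mem _ hs)⟩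
  obtain ⟨k, hk1, hk2⟩ := (hmem.and (hQtop.eventually_ge_atTop (M+1))).exists
  have hbound := hM (m₁ k - m₃ k, m₂ k - m₃ k) hk1
  simp only at hbound
  linarith
end

section
/- Let (Y,μ) be a probability space, F : Y → Y measure-preserving, φ : Y → (0,∞) integrable. For s ∈ ℂ with Re s > 0 define V̂(s)(y) = ∫₀^{φ(y)} e^{-s(φ(y)-u)} v(y,u) du and ŵ(s)(y) = ∫₀^{φ(y)} e^{-su} w(y,u) du, and v_s(y) = ∫₀^{φ(y)} e^{su} v(y,u) du, for v, w ∈ L^∞(Y^φ). Let R be the transfer operator of F and R̂(s)v = R(e^{-sφ}v). Then for all n ≥ 1, R^n(e^{-sφ_n} v_s) = R̂(s)^{n-1} R V̂(s), where φ_n = Σ_{j=0}^{n-1} φ∘F^j. -/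
open MeasureTheory

theorem stmt_15 {Y : Type*} (F : Y → Y) (φ : Y → ℝ) (hφpos : ∀ y, 0 < φ y)
    (v : Y × ℝ → ℂ) (s : ℂ) (hs : 0 < s.re)
    (R : (Y → ℂ) → (Y → ℂ))
    (hR : ∀ g h : Y → ℂ, (R fun y => g y * h (F y)) = fun y => R g y * h y)
    (n : ℕ) (hn : 1 ≤ n) :
    R^[n] (fun y => Complex.exp (-s * ((∑ j ∈ Finset.range n, φ (F^[j] y) : ℝ) : ℂ)) *
        ∫ u in (0:ℝ)..(φ y), Complex.exp (s * (u : ℂ)) * v (y, u)) =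
      (fun g : Y → ℂ => R fun y => Complex.exp (-s * (φ y : ℂ)) * g y)^[n - 1]
        (R fun y => ∫ u in (0:ℝ)..(φ y),
          Complex.exp (-s * ((φ y - u : ℝ) : ℂ)) * v (y, u)) := by
  set Rh : (Y → ℂ) → (Y → ℂ) := fun g : Y → ℂ => R fun y => Complex.exp (-s * (φ y : ℂ)) * g y
    with hRh
  -- key lemma
  have key : ∀ (m : ℕ) (g : Y → ℂ),
      R^[m] (fun y => Complex.exp (-s * ((∑ j ∈ Finset.range m, φ (F^[j] y) : ℝ) : ℂ)) * g y)
        = Rh^[m] g := by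
    intro m
    induction m with
    | zero => intro g; simp
    | succ m ih =>
      intro g
      rw [Function.iterate_succ_apply, Function.iterate_succ_apply]
      set H : Y → ℂ :=
        fun z => Complex.exp (-s * ((∑ j ∈ Finset.range m, φ (F^[j] z) : ℝ) : ℂ)) with hH
      have h1 : (fun y => Complex.exp (-s *
            ((∑ j ∈ Finset.range (m+1), φ (F^[j] y) : ℝ) : ℂ)) * g y)
          = fun y => (Complex.exp (-s * (φ y : ℂ)) * g y) * H (F y) := by
        funext y
        have hsum : (∑ j ∈ Finset.range (m+1), φ (F^[j] y))
            = (∑ j ∈ Finset.range m, φ (F^[j] (F y))) + φ y := by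
          rw [Finset.sum_range_succ']
          simp [Function.iterate_succ_apply]
        rw [hH, hsum]
        push_cast
        rw [mul_add, Complex.exp_add]
        ring
      rw [h1, hR]
      have h2 : (fun y => R (fun y => Complex.exp (-s * (φ y : ℂ)) * g y) y * H y)
          = fun y => H y * (Rh g) y := by
        funext y; rw [hRh]; ring
      rw [h2, hH, ih]
  -- rewrite LHS integrand
  have hVs : (fun y => Complex.exp (-s * (φ y : ℂ)) *
        ∫ u in (0:ℝ)..(φ y), Complex.exp (s * (u : ℂ)) * v (y, u))
      = fun y => ∫ u in (0:ℝ)..(φ y), Complex.exp (-s * ((φ y - u : ℝ) : ℂ)) * v (y, u) := by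
    funext y
    rw [← intervalIntegral.integral_const_mul]
    apply intervalIntegral.integral_congr
    intro u _
    have hexp : (-s * ((φ y - u : ℝ) : ℂ)) = (-s * (φ y : ℂ)) + s * (u : ℂ) := by
      push_cast; ring
    simp only []
    rw [hexp, Complex.exp_add]
    ring
  obtain ⟨k, rfl⟩ : ∃ k, n = k + 1 := ⟨n - 1, (Nat.succ_pred_eq_of_pos hn).symm⟩
  rw [key (k+1), Function.iterate_succ_apply, Nat.add_sub_cancel]
  exact congrArg (Rh^[k]) (congrArg R hVs)
end

section
/- Let ω ∈ (0,π) and suppose (ω_N)_{N≥1} is a sequence with ω_N ∈ (ω₀ − π/12, ω₀ + π/12) for some fixed ω₀. Then there do not exist an integer sequence M(k) → ∞ such that for every fixed j ∈ ℤ, lim_{k→∞} ((M(k)+j)ω + ω_{M(k)+j}) = π/2 (mod π). -/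
open Filter Real

lemma lemB_aux (ω : ℝ) (hω : 0 < ω) (hω' : ω ≤ π / 6) :
    ∃ j : ℕ, π / 6 < (j : ℝ) * ω ∧ (j : ℝ) * ω ≤ π / 6 + ω := by
  have hπ := Real.pi_pos
  have hex : ∃ j : ℕ, π / 6 < (j : ℝ) * ω := by
    obtain ⟨j, hj⟩ := exists_nat_gt ((π / 6) / ω)
    refine ⟨j, ?_⟩
    rw [div_lt_iff₀ hω] at hj
    linarith
  classical
  refine ⟨Nat.find hex, Nat.find_spec hex, ?_⟩
  have hpos : Nat.find hex ≠ 0 := by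
    intro h
    have := Nat.find_spec hex
    rw [h] at this
    simp at this
    linarith
  have hmin := Nat.find_min hex (m := Nat.find hex - 1) (by omega)
  push_neg at hmin
  have hc : ((Nat.find hex : ℝ)) = ((Nat.find hex - 1 : ℕ) : ℝ) + 1 := by
    have : Nat.find hex - 1 + 1 = Nat.find hex := by omega
    rw [← this]; push_cast; ring
  rw [hc]
  nlinarith [hmin]

lemma lemA_aux (ω : ℝ) (hω : ω ∈ Set.Ioo 0 π) :
    ∃ j n : ℤ, π / 6 < (j : ℝ) * ω - π * n ∧ (j : ℝ) * ω - π * n < 5 * π / 6 := by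
  have hπ := Real.pi_pos
  obtain ⟨h0, h1⟩ := hω
  by_cases hA : π / 6 < ω
  · by_cases hB : ω < 5 * π / 6
    · exact ⟨1, 0, by push_cast; constructor <;> linarith⟩
    · push_neg at hB
      have hω' : 0 < π - ω := by linarith
      have hω'' : π - ω ≤ π / 6 := by linarith
      obtain ⟨j, hj1, hj2⟩ := lemB_aux (π - ω) hω' hω''
      refine ⟨(j : ℤ), (j : ℤ) - 1, ?_, ?_⟩ <;> push_cast <;> nlinarith
  · push_neg at hA
    obtain ⟨j, hj1, hj2⟩ := lemB_aux ω h0 hA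
    exact ⟨(j : ℤ), 0, by push_cast; constructor <;> linarith⟩

theorem stmt_19 (ω ω₀ : ℝ) (hω : ω ∈ Set.Ioo 0 π)
    (ωs : ℕ → ℝ) (hωs : ∀ N : ℕ, 1 ≤ N → ωs N ∈ Set.Ioo (ω₀ - π / 12) (ω₀ + π / 12)) :
    ¬ ∃ M : ℕ → ℕ, Tendsto M atTop atTop ∧
      ∀ j : ℤ, ∀ ε > 0, ∃ K : ℕ, ∀ k ≥ K, ∃ m : ℤ,
        |((M k : ℝ) + (j : ℝ)) * ω + ωs (((M k : ℤ) + j).toNat) - (π / 2 + π * m)| < ε := by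
  rintro ⟨M, hM, hconv⟩
  have hπ := Real.pi_pos
  obtain ⟨j, n, hx1, hx2⟩ := lemA_aux ω hω
  set x : ℝ := (j : ℝ) * ω - π * n with hxdef
  set δ : ℝ := min (x - π / 6) (5 * π / 6 - x) with hδdef
  have hδ1 : δ ≤ x - π / 6 := min_le_left _ _
  have hδ2 : δ ≤ 5 * π / 6 - x := min_le_right _ _
  have hδ : 0 < δ := lt_min (by linarith) (by linarith)
  have hε : (0 : ℝ) < δ / 3 := by linarith
  obtain ⟨K₁, hK₁⟩ := hconv j (δ / 3) hε
  obtain ⟨K₀, hK₀⟩ := hconv 0 (δ / 3) hε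
  obtain ⟨K₂, hK₂⟩ := (Filter.eventually_atTop).mp (hM.eventually_ge_atTop (j.natAbs + 1))
  set k : ℕ := max (max K₁ K₀) K₂ with hk
  have hMk : j.natAbs + 1 ≤ M k := hK₂ k (le_max_right _ _)
  obtain ⟨m₁, hm₁⟩ := hK₁ k (le_trans (le_max_left _ _) (le_max_left _ _))
  obtain ⟨m₀, hm₀⟩ := hK₀ k (le_trans (le_max_right _ _) (le_max_left _ _))
  -- index bounds
  have hjn : -(j.natAbs : ℤ) ≤ j := by omega
  have hidx1 : 1 ≤ ((M k : ℤ) + j).toNat := by omega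
  have hidx0 : 1 ≤ ((M k : ℤ) + 0).toNat := by omega
  obtain ⟨ha1, ha2⟩ := hωs _ hidx1
  obtain ⟨hb1, hb2⟩ := hωs _ hidx0
  -- lower bound for |x - π * m|
  have key : ∀ m : ℤ, π / 6 + δ ≤ |x - π * m| := by
    intro m
    rcases lt_trichotomy m 0 with h | h | h
    · have hm' : m ≤ -1 := by omega
      have hm : (m : ℝ) ≤ -1 := by exact_mod_cast hm'
      have : π / 6 + δ ≤ x - π * m := by nlinarith
      exact this.trans (le_abs_self _)
    · subst h
      simp only [Int.cast_zero, mul_zero, sub_zero]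
      exact le_trans (by linarith) (le_abs_self x)
    · have hm : (1 : ℝ) ≤ (m : ℝ) := by exact_mod_cast h
      have h2 : π / 6 + δ ≤ π * m - x := by nlinarith
      have h3 : -(x - π * m) ≤ |x - π * m| := neg_le_abs _
      linarith
  have hlow := key (m₁ - m₀ - n)
  have hcast : x - π * ((m₁ - m₀ - n : ℤ) : ℝ) =
      ((j : ℝ) * ω - π * m₁ + π * m₀) := by push_cast [hxdef]; ring
  rw [hcast] at hlow
  rw [abs_lt] at hm₁ hm₀
  push_cast at hm₀
  rcases le_abs.mp hlow with h | h <;>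
    [skip; rw [neg_add, neg_sub] at h] <;> linarith [hm₁.1, hm₁.2, hm₀.1, hm₀.2]
end
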